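/- Let q ≥ 2 and n ≥ 1 be integers, and define φ : (Fin n → ZMod q) → ZMod (q^n) by φ(a) = Σ_{i : Fin n} (a i).val · q^(n−1−i) (reduced mod q^n). Then φ is a bijection, and for all a, b : Fin n → ZMod q, d_q(φ(a), φ(b)) = d_RT(a, b). Hence (ZMod (q^n), d_q) is isometric to ((ZMod q)^n, d_RT). -/

import Mathlib

/-- The `q`-adic distance on `ZMod (q^n)`: the least `i` (necessarily in
`{0,…,n}`) such that `q^(n-i)` divides the natural representative of `x - y`. -/
noncomputable def qadicDist (q n : ℕ) (x y : ZMod (q ^ n)) : ℕ :=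
  sInf {i : ℕ | q ^ (n - i) ∣ (x - y).val}

/-- The Rosenbloom–Tsfasman distance on `Fin n → A`: `0` if the tuples are
equal, and otherwise one plus the largest index where they differ. -/
noncomputable def rtDist {A : Type*} {n : ℕ} (a b : Fin n → A) : ℕ :=
  sSup {i : ℕ | ∃ j : Fin n, a j ≠ b j ∧ i = (j : ℕ) + 1}

lemma digitSum_dvd_iff (q : ℕ) (hq : 2 ≤ q) :
    ∀ (m : ℕ) (c : ℕ → ℤ), (∀ e, e < m → |c e| < q) →
    (((q:ℤ)^m ∣ ∑ e ∈ Finset.range m, c e * (q:ℤ)^e) ↔ ∀ e < m, c e = 0) := by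
  intro m
  induction m with
  | zero => intro c _; simp
  | succ m ih =>
    intro c hc
    have hq0 : (q:ℤ) ≠ 0 := by positivity
    rw [Finset.sum_range_succ']
    have hsum : ∑ e ∈ Finset.range m, c (e+1) * (q:ℤ)^(e+1)
        = (q:ℤ) * ∑ e ∈ Finset.range m, c (e+1) * (q:ℤ)^e := by
      rw [Finset.mul_sum]; exact Finset.sum_congr rfl fun e _ => by ring
    rw [hsum, pow_zero, mul_one]
    constructor
    · intro h
      have hqd : (q:ℤ) ∣ (q:ℤ) * ∑ e ∈ Finset.range m, c (e+1) * (q:ℤ)^e + c 0 :=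
        dvd_trans (dvd_pow_self (q:ℤ) (Nat.succ_ne_zero m)) h
      have hc0 : (q:ℤ) ∣ c 0 := by
        have h2 : (q:ℤ) ∣ (q:ℤ) * ∑ e ∈ Finset.range m, c (e+1) * (q:ℤ)^e :=
          Dvd.intro _ rfl
        have := dvd_sub hqd h2
        simpa using this
      have hc0' : c 0 = 0 := Int.eq_zero_of_abs_lt_dvd hc0 (hc 0 (Nat.succ_pos m))
      rw [hc0', add_zero, pow_succ'] at h
      have hT : (q:ℤ)^m ∣ ∑ e ∈ Finset.range m, c (e+1) * (q:ℤ)^e :=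
        (mul_dvd_mul_iff_left hq0).mp h
      have := (ih (fun e => c (e+1)) (fun e he => hc (e+1) (by omega))).mp hT
      intro e he
      cases e with
      | zero => exact hc0'
      | succ e => exact this e (by omega)
    · intro h
      have h1 : ∑ e ∈ Finset.range m, c (e+1) * (q:ℤ)^e = 0 :=
        Finset.sum_eq_zero fun e he => by
          rw [h (e+1) (by simpa using Nat.succ_lt_succ (Finset.mem_range.mp he))]; ring
      rw [h1, h 0 (Nat.succ_pos m), mul_zero, add_zero]
      exact dvd_zero _

lemma key_dvd (q n : ℕ) (hq : 2 ≤ q) (hn : 1 ≤ n)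
    (a b : Fin n → ZMod q) (m : ℕ) (hm : m ≤ n) :
    (q ^ m ∣ ((((∑ k : Fin n, (a k).val * q ^ (n - 1 - (k:ℕ)) : ℕ) : ZMod (q^n))
        - ((∑ k : Fin n, (b k).val * q ^ (n - 1 - (k:ℕ)) : ℕ) : ZMod (q^n))).val)
    ↔ ∀ j : Fin n, n - m ≤ (j:ℕ) → a j = b j) := by
  haveI : NeZero q := ⟨by omega⟩
  haveI : NeZero (q^n) := ⟨pow_ne_zero n (by omega)⟩
  set x : ℕ := ∑ k : Fin n, (a k).val * q ^ (n - 1 - (k:ℕ)) with hx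
  set y : ℕ := ∑ k : Fin n, (b k).val * q ^ (n - 1 - (k:ℕ)) with hy
  set z : ZMod (q^n) := (x : ZMod (q^n)) - y with hz
  -- Step 1: nat dvd of z.val ↔ int dvd of x - y
  have h1 : ((((x:ℤ) - y) - z.val : ℤ) : ZMod (q^n)) = 0 := by
    push_cast [hz, ZMod.natCast_val, ZMod.cast_id]
    ring
  have h2 : ((q:ℤ)^n) ∣ ((x:ℤ) - y - z.val) := by
    have := (ZMod.intCast_zmod_eq_zero_iff_dvd _ (q^n)).mp h1
    exact_mod_cast this
  have hmn : ((q:ℤ)^m) ∣ ((x:ℤ) - y - z.val) := dvd_trans (pow_dvd_pow _ hm) h2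
  have step1 : q ^ m ∣ z.val ↔ (q:ℤ)^m ∣ ((x:ℤ) - y) := by
    constructor
    · intro h
      have h' : (q:ℤ)^m ∣ (z.val : ℤ) := by exact_mod_cast h
      have := dvd_add hmn h'
      simpa using this
    · intro h
      have h' : (q:ℤ)^m ∣ (z.val : ℤ) := by
        have := dvd_sub h hmn
        simpa using this
      exact_mod_cast h'
  rw [step1]
  -- Step 2: rewrite x - y as digit sum indexed by exponent
  have hjn : ∀ e : ℕ, n - 1 - e < n := fun e => by omega
  set c : ℕ → ℤ := fun e =>
    ((a ⟨n - 1 - e, hjn e⟩).val : ℤ) - ((b ⟨n - 1 - e, hjn e⟩).val : ℤ) with hc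
  have hg : ∀ k : Fin n, c (n - 1 - (k:ℕ)) * (q:ℤ)^(n - 1 - (k:ℕ))
      = (((a k).val : ℤ) - ((b k).val : ℤ)) * (q:ℤ)^(n - 1 - (k:ℕ)) := by
    intro k
    have hk : (⟨n - 1 - (n - 1 - (k:ℕ)), hjn _⟩ : Fin n) = k := Fin.ext (by simp; omega)
    simp only [hc, hk]
  have step2 : (x:ℤ) - (y:ℤ) = ∑ e ∈ Finset.range n, c e * (q:ℤ)^e := by
    calc (x:ℤ) - (y:ℤ)
        = ∑ k : Fin n, (((a k).val : ℤ) - ((b k).val : ℤ)) * (q:ℤ)^(n - 1 - (k:ℕ)) := by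
          rw [hx, hy]
          push_cast
          rw [← Finset.sum_sub_distrib]
          exact Finset.sum_congr rfl fun k _ => by ring
      _ = ∑ k : Fin n, c (n - 1 - (k:ℕ)) * (q:ℤ)^(n - 1 - (k:ℕ)) :=
          Finset.sum_congr rfl fun k _ => (hg k).symm
      _ = ∑ k ∈ Finset.range n, c (n - 1 - k) * (q:ℤ)^(n - 1 - k) :=
          Fin.sum_univ_eq_sum_range (fun k => c (n - 1 - k) * (q:ℤ)^(n - 1 - k)) n
      _ = ∑ e ∈ Finset.range n, c e * (q:ℤ)^e :=
          Finset.sum_range_reflect (fun e => c e * (q:ℤ)^e) n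
  rw [step2]
  -- Step 3: split the sum, the high part is divisible by q^m
  have hsplit : (∑ e ∈ Finset.range m, c e * (q:ℤ)^e)
      + (∑ e ∈ Finset.Ico m n, c e * (q:ℤ)^e) = ∑ e ∈ Finset.range n, c e * (q:ℤ)^e := by
    rw [Finset.range_eq_Ico, Finset.range_eq_Ico]
    exact Finset.sum_Ico_consecutive (fun e => c e * (q:ℤ)^e) (Nat.zero_le m) hm
  have hhigh : (q:ℤ)^m ∣ ∑ e ∈ Finset.Ico m n, c e * (q:ℤ)^e :=
    Finset.dvd_sum fun e he =>
      dvd_mul_of_dvd_right (pow_dvd_pow _ (Finset.mem_Ico.mp he).1) _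
  rw [← hsplit, dvd_add_left hhigh]
  -- Step 4: apply the digit lemma
  have hcb : ∀ e, e < m → |c e| < (q:ℤ) := by
    intro e _
    have h1 := ZMod.val_lt (a ⟨n - 1 - e, hjn e⟩)
    have h2 := ZMod.val_lt (b ⟨n - 1 - e, hjn e⟩)
    simp only [hc, abs_lt]
    omega
  rw [digitSum_dvd_iff q hq m c hcb]
  constructor
  · intro h j hj
    have he : n - 1 - (j:ℕ) < m := by omega
    have hthis := h (n - 1 - (j:ℕ)) he
    simp only [hc] at hthis
    have hk : (⟨n - 1 - (n - 1 - (j:ℕ)), hjn _⟩ : Fin n) = j := Fin.ext (by simp; omega)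
    rw [hk] at hthis
    have hv : (a j).val = (b j).val := by omega
    exact ZMod.val_injective _ hv
  · intro h e he
    have hj : n - m ≤ n - 1 - e := by omega
    have := h ⟨n - 1 - e, hjn e⟩ hj
    simp only [hc, this, sub_self]

/-- The map `φ(a) = Σ_i (a i).val · q^(n-1-i) mod q^n` is a
bijection from `(ZMod q)^n` to `ZMod (q^n)` carrying the RT distance to the
`q`-adic distance; hence `(ZMod (q^n), d_q) ≃ ((ZMod q)^n, d_RT)`. -/
theorem stmt_7 (q n : ℕ) (hq : 2 ≤ q) (hn : 1 ≤ n)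
    (φ : (Fin n → ZMod q) → ZMod (q ^ n))
    (hφ : ∀ a, φ a = ((∑ i : Fin n, (a i).val * q ^ (n - 1 - (i : ℕ)) : ℕ) : ZMod (q ^ n))) :
    Function.Bijective φ ∧
      ∀ a b : Fin n → ZMod q, qadicDist q n (φ a) (φ b) = rtDist a b := by
  haveI : NeZero q := ⟨by omega⟩
  haveI : NeZero (q^n) := ⟨pow_ne_zero n (by omega)⟩
  -- key equivalence
  have key : ∀ (a b : Fin n → ZMod q) (i : ℕ),
      (q ^ (n - i) ∣ (φ a - φ b).val ↔ ∀ j : Fin n, i ≤ (j:ℕ) → a j = b j) := by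
    intro a b i
    rw [hφ a, hφ b]
    rw [key_dvd q n hq hn a b (n - i) (Nat.sub_le n i)]
    constructor
    · intro h j hj
      exact h j (by omega)
    · intro h j hj
      have hjlt := j.isLt
      exact h j (by omega)
  have hinj : Function.Injective φ := by
    intro a b hab
    have h0 : q ^ (n - 0) ∣ (φ a - φ b).val := by
      rw [hab, sub_self, ZMod.val_zero]
      exact dvd_zero _
    funext j
    exact (key a b 0).mp h0 j (Nat.zero_le _)
  have hbij : Function.Bijective φ := by
    rw [Fintype.bijective_iff_injective_and_card]
    refine ⟨hinj, ?_⟩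
    rw [Fintype.card_fun, Fintype.card_fin, ZMod.card, ZMod.card]
  refine ⟨hbij, ?_⟩
  intro a b
  have hset : {i : ℕ | q ^ (n - i) ∣ (φ a - φ b).val}
      = {i : ℕ | ∀ j : Fin n, i ≤ (j:ℕ) → a j = b j} := by
    ext i; exact key a b i
  rw [qadicDist, hset, rtDist]
  by_cases hab : a = b
  · subst hab
    have h1 : sInf {i : ℕ | ∀ j : Fin n, i ≤ (j:ℕ) → a j = a j} = 0 :=
      Nat.sInf_eq_zero.mpr (Or.inl (fun j _ => rfl))
    have h2 : {i : ℕ | ∃ j : Fin n, a j ≠ a j ∧ i = (j : ℕ) + 1} = (∅ : Set ℕ) := by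
      ext i; simp
    rw [h1, h2, csSup_empty]
    rfl
  · -- there is a largest differing index
    have hD : (Finset.univ.filter (fun j : Fin n => a j ≠ b j)).Nonempty := by
      rw [Finset.filter_nonempty_iff]
      by_contra h
      push_neg at h
      exact hab (funext fun j => h j (Finset.mem_univ j))
    set D := Finset.univ.filter (fun j : Fin n => a j ≠ b j) with hDdef
    set J := D.max' hD with hJ
    have hJmem : a J ≠ b J := (Finset.mem_filter.mp (D.max'_mem hD)).2
    have hJmax : ∀ j : Fin n, a j ≠ b j → (j:ℕ) ≤ (J:ℕ) := by
      intro j hj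
      exact D.le_max' j (Finset.mem_filter.mpr ⟨Finset.mem_univ j, hj⟩)
    -- sInf of T equals J+1
    have hT : sInf {i : ℕ | ∀ j : Fin n, i ≤ (j:ℕ) → a j = b j} = (J:ℕ) + 1 := by
      apply le_antisymm
      · apply Nat.sInf_le
        intro j hj
        by_contra hne
        have := hJmax j hne
        omega
      · apply le_csInf
        · exact ⟨n, fun j hj => absurd j.isLt (by omega)⟩
        · intro i hi
          by_contra hlt
          push_neg at hlt
          exact hJmem (hi J (by omega))
    -- sSup of S equals J+1
    have hS : sSup {i : ℕ | ∃ j : Fin n, a j ≠ b j ∧ i = (j : ℕ) + 1} = (J:ℕ) + 1 := by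
      apply le_antisymm
      · have hne : {i : ℕ | ∃ j : Fin n, a j ≠ b j ∧ i = (j : ℕ) + 1}.Nonempty :=
          ⟨(J:ℕ)+1, J, hJmem, rfl⟩
        apply csSup_le hne
        rintro i ⟨j, hj, rfl⟩
        exact Nat.succ_le_succ (hJmax j hj)
      · apply le_csSup
        · exact ⟨n, by rintro i ⟨j, hj, rfl⟩; exact j.isLt⟩
        · exact ⟨J, hJmem, rfl⟩
    rw [hT, hS]
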